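/- For every x ∈ ℝ^n, define v(x) = w(x) / (1_n^T w(x)) where w(x) = (a ⊙ e^x) ⊘ e^{F(x)}, and define the reduced Jacobian G(x) = (dF/dx)(x) − 1_n v(x)^T ∈ ℝ^{n×n}. Then G(x) is diagonalizable over ℝ; more precisely, G(x) · 1_n = 0, every eigenvector u of (dF/dx)(x) with eigenvalue d ≠ 1 satisfies G(x) u = d u, and every eigenvalue λ ∈ ℂ of G(x) satisfies |λ| < 1. -/

import Mathlib

open Finset Matrix


section Aux

variable (n m : ℕ) (a : Fin n → ℝ) (b : Fin m → ℝ) (K : Matrix (Fin n) (Fin m) ℝ)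
  (x : Fin n → ℝ)

/-- `h j = (Kᵀ eˣ)_j`. -/
noncomputable def sinkH : Fin m → ℝ := fun j => ∑ i', K i' j * Real.exp (x i')

/-- `g p = (K (b ⊘ h))_p`. -/
noncomputable def sinkG : Fin n → ℝ := fun p => ∑ j, K p j * (b j / sinkH n m K x j)

/-- explicit Jacobian -/
noncomputable def sinkJ : Matrix (Fin n) (Fin n) ℝ := fun p i =>
  (∑ j, K p j * b j * (K i j * Real.exp (x i)) / (sinkH n m K x j) ^ 2) / sinkG n m b K x p

variable (hn : 0 < n) (hm : 0 < m)
  (hb_pos : ∀ j, 0 < b j) (hK_pos : ∀ i j, 0 < K i j)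

include hn hK_pos in
lemma sinkH_pos : ∀ j, 0 < sinkH n m K x j := fun j =>
  Finset.sum_pos (fun i' _ => mul_pos (hK_pos i' j) (Real.exp_pos _)) ⟨⟨0, hn⟩, Finset.mem_univ _⟩

include hn hm hb_pos hK_pos in
lemma sinkG_pos : ∀ p, 0 < sinkG n m b K x p := fun p =>
  Finset.sum_pos (fun j _ => mul_pos (hK_pos p j)
    (div_pos (hb_pos j) (sinkH_pos n m K x hn hK_pos j))) ⟨⟨0, hm⟩, Finset.mem_univ _⟩

include hn hm hb_pos hK_pos in
lemma sinkJ_pos : ∀ p i, 0 < sinkJ n m b K x p i := by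
  intro p i
  apply div_pos _ (sinkG_pos n m b K x hn hm hb_pos hK_pos p)
  refine Finset.sum_pos (fun j _ => ?_) ⟨⟨0, hm⟩, Finset.mem_univ _⟩
  exact div_pos (mul_pos (mul_pos (hK_pos p j) (hb_pos j))
    (mul_pos (hK_pos i j) (Real.exp_pos _)))
    (pow_pos (sinkH_pos n m K x hn hK_pos j) 2)

include hn hm hb_pos hK_pos in
lemma sinkJ_row : ∀ p, ∑ i, sinkJ n m b K x p i = 1 := by
  intro p
  have hg := (sinkG_pos n m b K x hn hm hb_pos hK_pos p).ne'
  simp only [sinkJ]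
  rw [← Finset.sum_div, div_eq_one_iff_eq hg]
  rw [Finset.sum_comm]
  show ∑ j, ∑ i, K p j * b j * (K i j * Real.exp (x i)) / sinkH n m K x j ^ 2 = _
  refine Finset.sum_congr rfl fun j _ => ?_
  have hh := (sinkH_pos n m K x hn hK_pos j).ne'
  rw [← Finset.sum_div]
  rw [show ∑ i, K p j * b j * (K i j * Real.exp (x i))
      = K p j * b j * sinkH n m K x j by rw [sinkH, Finset.mul_sum]]
  rw [sq]
  field_simp

include hn hm hb_pos hK_pos in
lemma sinkJ_symm : ∀ p i,
    (Real.exp (x p) * sinkG n m b K x p) * sinkJ n m b K x p i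
      = (Real.exp (x i) * sinkG n m b K x i) * sinkJ n m b K x i p := by
  intro p i
  have hgp := (sinkG_pos n m b K x hn hm hb_pos hK_pos p).ne'
  have hgi := (sinkG_pos n m b K x hn hm hb_pos hK_pos i).ne'
  have key : ∀ (g A e : ℝ), g ≠ 0 → (e * g) * (A / g) = e * A := by
    intro g A e hg; field_simp
  rw [sinkJ, sinkJ, key _ _ _ hgp, key _ _ _ hgi, Finset.mul_sum, Finset.mul_sum]
  exact Finset.sum_congr rfl fun j _ => by ring

lemma jac_formula (n m : ℕ)
    (a : Fin n → ℝ) (b : Fin m → ℝ) (K : Matrix (Fin n) (Fin m) ℝ)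
    (hb_pos : ∀ j, 0 < b j) (hK_pos : ∀ i j, 0 < K i j)
    (hm : 0 < m) (hn : 0 < n)
    (x : Fin n → ℝ) :
    fderiv ℝ (fun y p => Real.log (a p) -
        Real.log (∑ j, K p j * (b j / ∑ i', K i' j * Real.exp (y i')))) x
      = ContinuousLinearMap.pi (fun p =>
          -((∑ j, K p j * (b j / ∑ i', K i' j * Real.exp (x i')))⁻¹ •
            (∑ j, (K p j) • ((b j) •
              ((-(((∑ i', K i' j * Real.exp (x i')) ^ 2)⁻¹)) •
                (∑ i', (K i' j) • (Real.exp (x i') •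
                  (ContinuousLinearMap.proj i' : (Fin n → ℝ) →L[ℝ] ℝ)))))))) := by
  have hh_pos : ∀ j, 0 < ∑ i', K i' j * Real.exp (x i') := fun j =>
    Finset.sum_pos (fun i' _ => mul_pos (hK_pos i' j) (Real.exp_pos _))
      ⟨⟨0, hn⟩, Finset.mem_univ _⟩
  have hg_pos : ∀ p, 0 < ∑ j, K p j * (b j / ∑ i', K i' j * Real.exp (x i')) :=
    fun p => Finset.sum_pos (fun j _ => mul_pos (hK_pos p j)
      (div_pos (hb_pos j) (hh_pos j))) ⟨⟨0, hm⟩, Finset.mem_univ _⟩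
  apply HasFDerivAt.fderiv
  apply hasFDerivAt_pi.2
  intro p
  have hhd : ∀ j, HasFDerivAt (fun y => ∑ i', K i' j * Real.exp (y i'))
      (∑ i', (K i' j) • (Real.exp (x i') •
        (ContinuousLinearMap.proj i' : (Fin n → ℝ) →L[ℝ] ℝ))) x :=
    fun j => HasFDerivAt.fun_sum (fun i' _ => ((hasFDerivAt_apply i' x).exp.const_mul (K i' j)))
  have hgd : HasFDerivAt (fun y => ∑ j, K p j * (b j / ∑ i', K i' j * Real.exp (y i')))
      (∑ j, (K p j) • ((b j) • ((-(((∑ i', K i' j * Real.exp (x i')) ^ 2)⁻¹)) •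
        (∑ i', (K i' j) • (Real.exp (x i') •
          (ContinuousLinearMap.proj i' : (Fin n → ℝ) →L[ℝ] ℝ)))))) x :=
    HasFDerivAt.fun_sum fun j _ =>
      ((((hasDerivAt_inv (hh_pos j).ne').comp_hasFDerivAt x (hhd j)).const_mul
        (b j)).const_mul (K p j))
  exact (hgd.log (hg_pos p).ne').const_sub (Real.log (a p))

lemma jac_entry (n m : ℕ)
    (a : Fin n → ℝ) (b : Fin m → ℝ) (K : Matrix (Fin n) (Fin m) ℝ)
    (hb_pos : ∀ j, 0 < b j) (hK_pos : ∀ i j, 0 < K i j)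
    (hm : 0 < m) (hn : 0 < n)
    (x : Fin n → ℝ) (p i : Fin n) :
    fderiv ℝ (fun y p => Real.log (a p) -
        Real.log (∑ j, K p j * (b j / ∑ i', K i' j * Real.exp (y i')))) x (Pi.single i 1) p
      = (∑ j, K p j * b j * (K i j * Real.exp (x i)) /
          (∑ i', K i' j * Real.exp (x i')) ^ 2) /
        (∑ j, K p j * (b j / ∑ i', K i' j * Real.exp (x i'))) := by
  rw [jac_formula n m a b K hb_pos hK_pos hm hn x]
  simp [ContinuousLinearMap.pi_apply, ContinuousLinearMap.sum_apply,
    ContinuousLinearMap.smul_apply, ContinuousLinearMap.proj_apply, Pi.single_apply,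
    mul_ite, Finset.sum_ite_eq, div_eq_mul_inv, Finset.sum_neg_distrib, Finset.mul_sum]
  rw [← Finset.mul_sum, mul_comm]
  congr 1
  exact Finset.sum_congr rfl fun j _ => by ring

end Aux

lemma perron_strict (n : ℕ) (hn : 0 < n) (J : Matrix (Fin n) (Fin n) ℝ) (v : Fin n → ℝ)
    (hJpos : ∀ p i, 0 < J p i) (hrow : ∀ p, ∑ i, J p i = 1)
    (hv_pos : ∀ i, 0 < v i)
    (d : ℝ) (u : Fin n → ℝ) (hu : u ≠ 0)
    (heig : ∀ p, ∑ i, J p i * u i = d * u p)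
    (hvu : ∑ i, v i * u i = 0) : |d| < 1 := by
  obtain ⟨i0, -, hi0⟩ := Finset.exists_max_image Finset.univ (fun k => |u k|)
    ⟨⟨0, hn⟩, Finset.mem_univ _⟩
  simp only [Finset.mem_univ, forall_const] at hi0
  have hM : 0 < |u i0| := by
    rcases (abs_nonneg (u i0)).lt_or_eq with h | h
    · exact h
    · exfalso; apply hu; funext k
      have := hi0 k
      rw [← h] at this
      simpa using le_antisymm this (abs_nonneg _)
  have habs : |d| ≤ 1 := by
    have h1 : |d| * |u i0| = |∑ i, J i0 i * u i| := by rw [heig, abs_mul]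
    have h2 : |∑ i, J i0 i * u i| ≤ ∑ i, J i0 i * |u i| := by
      refine (Finset.abs_sum_le_sum_abs _ _).trans (le_of_eq ?_)
      exact Finset.sum_congr rfl fun i _ => by rw [abs_mul, abs_of_pos (hJpos i0 i)]
    have h3 : ∑ i, J i0 i * |u i| ≤ ∑ i, J i0 i * |u i0| :=
      Finset.sum_le_sum fun i _ => mul_le_mul_of_nonneg_left (hi0 i) (hJpos i0 i).le
    have h4 : ∑ i, J i0 i * |u i0| = |u i0| := by
      rw [← Finset.sum_mul, hrow, one_mul]
    have := (h1.le.trans h2).trans (h3.trans_eq h4)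
    calc |d| = |d| * |u i0| / |u i0| := by field_simp
    _ ≤ |u i0| / |u i0| := by gcongr
    _ = 1 := by field_simp
  have hd1 : d ≠ 1 := by
    intro hd; subst hd
    obtain ⟨i1, -, hi1⟩ := Finset.exists_max_image Finset.univ u ⟨⟨0, hn⟩, Finset.mem_univ _⟩
    simp only [Finset.mem_univ, forall_const] at hi1
    have hz : ∑ k, J i1 k * (u i1 - u k) = 0 := by
      simp only [mul_sub, Finset.sum_sub_distrib, ← Finset.sum_mul, hrow, heig]
      ring
    have hconst : ∀ k, u k = u i1 := by
      intro k
      have := (Finset.sum_eq_zero_iff_of_nonneg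
        (fun k _ => mul_nonneg (hJpos i1 k).le (sub_nonneg.2 (hi1 k)))).1 hz k
        (Finset.mem_univ _)
      have := mul_eq_zero.1 this
      rcases this with h | h
      · exact absurd h (hJpos i1 k).ne'
      · linarith [sub_eq_zero.1 h]
    have h0 : u i1 * ∑ k, v k = 0 := by
      rw [Finset.mul_sum, ← hvu]
      exact Finset.sum_congr rfl fun k _ => by rw [hconst k]; ring
    have hvs : 0 < ∑ k, v k :=
      Finset.sum_pos (fun k _ => hv_pos k) ⟨⟨0, hn⟩, Finset.mem_univ _⟩
    have : u i1 = 0 := by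
      rcases mul_eq_zero.1 h0 with h | h
      · exact h
      · exact absurd h hvs.ne'
    apply hu; funext k; rw [hconst k, this]; rfl
  have hdm1 : d ≠ -1 := by
    intro hd; subst hd
    set u' : Fin n → ℝ := if 0 ≤ u i0 then u else -u with hu'
    have hu'i0 : u' i0 = |u i0| := by
      rw [hu']; split
      · rw [abs_of_nonneg]; assumption
      · simp only [Pi.neg_apply]; rw [abs_of_neg (by linarith [not_le.1 (by assumption)])]
    have hu'abs : ∀ k, |u' k| = |u k| := by
      intro k; rw [hu']; split <;> simp
    have heig' : ∀ p, ∑ i, J p i * u' i = -u' p := by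
      intro p; rw [hu']; split <;> simp [heig, mul_comm]
    have hz : ∑ k, J i0 k * (u' k + |u i0|) = 0 := by
      simp only [mul_add, Finset.sum_add_distrib, ← Finset.sum_mul, hrow, heig']
      rw [hu'i0]; ring
    have hnn : ∀ k ∈ Finset.univ, 0 ≤ J i0 k * (u' k + |u i0|) := by
      intro k _
      refine mul_nonneg (hJpos i0 k).le ?_
      have h1 := neg_abs_le (u' k)
      have h2 : |u' k| ≤ |u i0| := by rw [hu'abs k]; exact hi0 k
      linarith
    have : ∀ k, u' k = -|u i0| := by
      intro k
      have hzero := (Finset.sum_eq_zero_iff_of_nonneg hnn).1 hz k (Finset.mem_univ _)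
      rcases mul_eq_zero.1 hzero with h | h
      · exact absurd h (hJpos i0 k).ne'
      · linarith
    have := this i0
    rw [hu'i0] at this
    linarith
  rcases habs.lt_or_eq with h | h
  · exact h
  · exfalso
    rcases abs_eq (zero_le_one (α:=ℝ)) |>.1 h with h1 | h1
    · exact hd1 h1
    · exact hdm1 h1

lemma eig_real_of_sym (n : ℕ) (J : Matrix (Fin n) (Fin n) ℝ) (w : Fin n → ℝ)
    (hw_pos : ∀ i, 0 < w i)
    (hsym : ∀ p i, w p * J p i = w i * J i p)
    (lam : ℂ) (z : Fin n → ℂ) (hz : z ≠ 0)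
    (heig : ∀ p, ∑ i, (J p i : ℂ) * z i = lam * z p) : lam.im = 0 := by
  set r : ℂ := ∑ p, ∑ i, (w p : ℂ) * (J p i : ℂ) * (starRingEnd ℂ) (z p) * z i with hr_def
  set t : ℝ := ∑ p, w p * Complex.normSq (z p) with ht_def
  have ht : 0 < t := by
    obtain ⟨p0, hp0⟩ := Function.ne_iff.1 hz
    refine Finset.sum_pos' (fun p _ => mul_nonneg (hw_pos p).le (Complex.normSq_nonneg _))
      ⟨p0, Finset.mem_univ _, mul_pos (hw_pos p0) ?_⟩
    simpa [Complex.normSq_pos] using hp0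
  have hconj : (starRingEnd ℂ) r = r := by
    rw [hr_def]
    simp only [map_sum, _root_.map_mul, Complex.conj_ofReal, Complex.conj_conj]
    rw [Finset.sum_comm]
    refine Finset.sum_congr rfl fun p _ => Finset.sum_congr rfl fun i _ => ?_
    have hpi : ((w i : ℂ) * (J i p : ℂ)) = ((w p : ℂ) * (J p i : ℂ)) := by
      exact_mod_cast congrArg Complex.ofReal (hsym i p)
    linear_combination (z i * (starRingEnd ℂ) (z p)) * hpi
  have hrt : r = lam * (t : ℂ) := by
    rw [hr_def]
    have : ∀ p, ∑ i, (w p : ℂ) * (J p i : ℂ) * (starRingEnd ℂ) (z p) * z i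
        = lam * ((w p : ℝ) * Complex.normSq (z p) : ℝ) := by
      intro p
      have e1 : ∑ i, (w p : ℂ) * (J p i : ℂ) * (starRingEnd ℂ) (z p) * z i
          = ((w p : ℂ) * (starRingEnd ℂ) (z p)) * ∑ i, (J p i : ℂ) * z i := by
        rw [Finset.mul_sum]; exact Finset.sum_congr rfl fun i _ => by ring
      rw [e1, heig p]
      rw [show ((w p : ℝ) * Complex.normSq (z p) : ℝ) = ((w p : ℂ) * ((starRingEnd ℂ) (z p) * z p) : ℂ) by
        push_cast
        rw [← Complex.normSq_eq_conj_mul_self]]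
      ring
    rw [Finset.sum_congr rfl fun p _ => this p, ← Finset.mul_sum, ht_def]
    push_cast
    ring
  have h0 : ((starRingEnd ℂ) lam - lam) * (t : ℂ) = 0 := by
    have h2 := hconj
    rw [hrt, _root_.map_mul, Complex.conj_ofReal] at h2
    rw [sub_mul, h2, sub_self]
  have htne : (t : ℂ) ≠ 0 := by exact_mod_cast ht.ne'
  have : (starRingEnd ℂ) lam = lam := by
    have := (mul_eq_zero.1 h0).resolve_right htne
    exact sub_eq_zero.1 this
  exact (Complex.conj_eq_iff_im.1 this)

lemma diag_of_sym (n : ℕ) (G : Matrix (Fin n) (Fin n) ℝ) (s : Fin n → ℝ)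
    (hs : ∀ i, 0 < s i)
    (hsym : ∀ p i, s p ^ 2 * G p i = s i ^ 2 * G i p) :
    ∃ (Q : Matrix (Fin n) (Fin n) ℝ) (d : Fin n → ℝ),
      IsUnit Q.det ∧ G = Q * Matrix.diagonal d * Q⁻¹ := by
  have hsne : ∀ i, s i ≠ 0 := fun i => (hs i).ne'
  set C : Matrix (Fin n) (Fin n) ℝ :=
    diagonal s * G * diagonal (fun i => (s i)⁻¹) with hC_def
  have hCapp : ∀ p i, C p i = s p * G p i * (s i)⁻¹ := by
    intro p i
    rw [hC_def, Matrix.mul_apply]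
    simp [Matrix.diagonal_mul, Matrix.mul_diagonal, Matrix.diagonal_apply, Finset.sum_ite_eq,
      Matrix.mul_apply]
  have key : ∀ (sp si gp gi : ℝ), sp ≠ 0 → si ≠ 0 → sp ^ 2 * gp = si ^ 2 * gi →
      si * gi * sp⁻¹ = sp * gp * si⁻¹ := by
    intro sp si gp gi hp hi h
    field_simp
    nlinarith [h]
  have hC : C.IsHermitian := by
    rw [Matrix.IsHermitian]
    ext p i
    rw [Matrix.conjTranspose_apply, star_trivial, hCapp p i, hCapp i p]
    exact key (s p) (s i) (G p i) (G i p) (hsne p) (hsne i) (hsym p i)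
  have hdd : diagonal (fun i => (s i)⁻¹) * diagonal s = (1 : Matrix (Fin n) (Fin n) ℝ) := by
    have h1 : (fun i => (s i)⁻¹ * s i) = fun _ => (1 : ℝ) :=
      funext fun i => inv_mul_cancel₀ (hsne i)
    rw [Matrix.diagonal_mul_diagonal, h1, Matrix.diagonal_one]
  have hdd' : diagonal s * diagonal (fun i => (s i)⁻¹) = (1 : Matrix (Fin n) (Fin n) ℝ) := by
    have h1 : (fun i => s i * (s i)⁻¹) = fun _ => (1 : ℝ) :=
      funext fun i => mul_inv_cancel₀ (hsne i)
    rw [Matrix.diagonal_mul_diagonal, h1, Matrix.diagonal_one]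
  set U : Matrix (Fin n) (Fin n) ℝ := (hC.eigenvectorUnitary : Matrix (Fin n) (Fin n) ℝ) with hU_def
  have hUU : U * star U = 1 := Matrix.mem_unitaryGroup_iff.mp hC.eigenvectorUnitary.2
  refine ⟨diagonal (fun i => (s i)⁻¹) * U, hC.eigenvalues, ?_, ?_⟩
  case _ =>
    exact Matrix.isUnit_det_of_right_inverse (B := star U * diagonal s)
      (by rw [Matrix.mul_assoc, ← Matrix.mul_assoc U, hUU, Matrix.one_mul, hdd])
  case _ =>
    have hQinv : (diagonal (fun i => (s i)⁻¹) * U)⁻¹ = star U * diagonal s :=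
      Matrix.inv_eq_right_inv
        (by rw [Matrix.mul_assoc, ← Matrix.mul_assoc U, hUU, Matrix.one_mul, hdd])
    rw [hQinv]
    have hGC : G = diagonal (fun i => (s i)⁻¹) * C * diagonal s := by
      rw [hC_def, Matrix.mul_assoc, Matrix.mul_assoc, hdd, Matrix.mul_one, ← Matrix.mul_assoc,
        hdd, Matrix.one_mul]
    rw [hGC]
    conv_lhs => rw [hC.spectral_theorem]
    have hof : Matrix.diagonal (RCLike.ofReal ∘ hC.eigenvalues)
        = Matrix.diagonal hC.eigenvalues := rfl
    rw [hof]
    rw [Unitary.conjStarAlgAut_apply, ← hU_def]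
    simp only [Matrix.mul_assoc]

/-- The reduced Jacobian `G(x) = (dF/dx)(x) - 1ₙ v(x)ᵀ`, where
`v(x) = w(x) / (1ₙᵀ w(x))` and `w(x) = (a ⊙ eˣ) ⊘ e^{F x}`, is diagonalizable over
`ℝ`; moreover `G(x) 1ₙ = 0`, every eigenvector `u` of `(dF/dx)(x)` with eigenvalue
`d ≠ 1` satisfies `G(x) u = d u`, and every complex eigenvalue of `G(x)` has modulus
strictly smaller than `1`. -/
theorem reduced_jacobian_properties
    (n m : ℕ) (hn : 0 < n) (hm : 0 < m)
    (a : Fin n → ℝ) (b : Fin m → ℝ) (K : Matrix (Fin n) (Fin m) ℝ)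
    (ha_pos : ∀ i, 0 < a i) (ha_sum : ∑ i, a i = 1)
    (hb_pos : ∀ j, 0 < b j) (hb_sum : ∑ j, b j = 1)
    (hK_pos : ∀ i j, 0 < K i j)
    (F : (Fin n → ℝ) → Fin n → ℝ)
    (hF : ∀ x i, F x i = Real.log (a i) -
      Real.log (∑ j, K i j * (b j / ∑ i', K i' j * Real.exp (x i'))))
    (J : (Fin n → ℝ) → Matrix (Fin n) (Fin n) ℝ)
    (hJ : ∀ x j i, J x j i = fderiv ℝ F x (Pi.single i 1) j)
    (w : (Fin n → ℝ) → Fin n → ℝ)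
    (hw : ∀ x i, w x i = a i * Real.exp (x i) / Real.exp (F x i))
    (v : (Fin n → ℝ) → Fin n → ℝ)
    (hv : ∀ x i, v x i = w x i / ∑ i', w x i')
    (G : (Fin n → ℝ) → Matrix (Fin n) (Fin n) ℝ)
    (hG : ∀ x, G x = J x - Matrix.vecMulVec (fun _ => 1) (v x)) :
    ∀ x : Fin n → ℝ,
      (∃ (Q : Matrix (Fin n) (Fin n) ℝ) (d : Fin n → ℝ),
        IsUnit Q.det ∧ G x = Q * Matrix.diagonal d * Q⁻¹) ∧
      ((G x).mulVec (fun _ => 1) = 0) ∧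
      (∀ (u : Fin n → ℝ) (d : ℝ), d ≠ 1 → (J x).mulVec u = d • u →
        (G x).mulVec u = d • u) ∧
      (∀ lam : ℂ,
        (∃ z : Fin n → ℂ, z ≠ 0 ∧
          ((G x).map (fun r => (r : ℂ))).mulVec z = lam • z) →
        ‖lam‖ < 1) := by
  intro x
  -- identify F with the explicit function
  have hFfun : F = fun y q => Real.log (a q) -
      Real.log (∑ j, K q j * (b j / ∑ i', K i' j * Real.exp (y i'))) :=
    funext fun y => funext fun q => hF y q
  -- explicit Jacobian
  have hJx : ∀ p i, J x p i = sinkJ n m b K x p i := by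
    intro p i
    rw [hJ, hFfun, jac_entry n m a b K hb_pos hK_pos hm hn x p i]
    simp only [sinkJ, sinkH, sinkG]
  have hJpos : ∀ p i, 0 < J x p i := by
    intro p i; rw [hJx]; exact sinkJ_pos n m b K x hn hm hb_pos hK_pos p i
  have hrow : ∀ p, ∑ i, J x p i = 1 := by
    intro p
    rw [Finset.sum_congr rfl fun i _ => hJx p i]
    exact sinkJ_row n m b K x hn hm hb_pos hK_pos p
  -- explicit w
  have hg_pos := sinkG_pos n m b K x hn hm hb_pos hK_pos
  have hwx : ∀ i, w x i = Real.exp (x i) * sinkG n m b K x i := by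
    intro i
    have hgpos : (0:ℝ) < ∑ j, K i j * (b j / ∑ i', K i' j * Real.exp (x i')) := by
      have := hg_pos i
      simpa only [sinkG, sinkH] using this
    rw [hw, hF, Real.exp_sub, Real.exp_log (ha_pos i), Real.exp_log hgpos]
    simp only [sinkG, sinkH]
    rw [div_div_eq_mul_div, div_eq_iff (ha_pos i).ne']
    ring
  have hw_pos : ∀ i, 0 < w x i := fun i =>
    (hwx i) ▸ mul_pos (Real.exp_pos _) (hg_pos i)
  have hT_pos : 0 < ∑ i', w x i' :=
    Finset.sum_pos (fun i _ => hw_pos i) ⟨⟨0, hn⟩, Finset.mem_univ _⟩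
  have hv_pos : ∀ i, 0 < v x i := by
    intro i; rw [hv]; exact div_pos (hw_pos i) hT_pos
  have hv_sum : ∑ i, v x i = 1 := by
    rw [Finset.sum_congr rfl fun i _ => hv x i, ← Finset.sum_div, div_self hT_pos.ne']
  -- symmetry
  have hwsym : ∀ p i, w x p * J x p i = w x i * J x i p := by
    intro p i
    rw [hwx, hwx, hJx, hJx]
    exact sinkJ_symm n m b K x hn hm hb_pos hK_pos p i
  -- left eigenvector
  have hleft : ∀ i, ∑ p, v x p * J x p i = v x i := by
    intro i
    have h1 : ∑ p, w x p * J x p i = w x i := by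
      rw [Finset.sum_congr rfl fun p _ => hwsym p i, ← Finset.mul_sum, hrow, mul_one]
    rw [Finset.sum_congr rfl fun p _ => by rw [hv x p, div_mul_eq_mul_div],
      ← Finset.sum_div, h1, ← hv x i]
  -- G entries
  have hGapp : ∀ p i, G x p i = J x p i - v x i := by
    intro p i
    rw [hG]
    simp [Matrix.sub_apply, Matrix.vecMulVec_apply]
  refine ⟨?_, ?_, ?_, ?_⟩
  · -- diagonalizability
    apply diag_of_sym n (G x) (fun i => Real.sqrt (w x i))
      (fun i => Real.sqrt_pos.2 (hw_pos i))
    intro p i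
    rw [Real.sq_sqrt (hw_pos p).le, Real.sq_sqrt (hw_pos i).le, hGapp, hGapp,
      mul_sub, mul_sub, hwsym p i]
    have : w x p * v x i = w x i * v x p := by
      rw [hv, hv]; ring
    rw [this]
  · -- G 1 = 0
    funext p
    simp only [Matrix.mulVec, dotProduct, Pi.zero_apply]
    rw [Finset.sum_congr rfl fun i _ => by rw [hGapp p i, mul_one]]
    rw [Finset.sum_sub_distrib, hrow, hv_sum, sub_self]
  · -- eigenvectors with d ≠ 1
    intro u d hd hJu
    have hvu : ∑ i, v x i * u i = 0 := by
      have h1 : ∑ i, v x i * ((J x).mulVec u i) = ∑ i, v x i * (d * u i) := by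
        rw [hJu]; exact Finset.sum_congr rfl fun i _ => by rw [Pi.smul_apply, smul_eq_mul]
      have h2 : ∑ i, v x i * ((J x).mulVec u i) = ∑ k, v x k * u k := by
        simp only [Matrix.mulVec, dotProduct, Finset.mul_sum]
        rw [Finset.sum_comm]
        refine Finset.sum_congr rfl fun k _ => ?_
        rw [show ∑ p, v x p * (J x p k * u k) = (∑ p, v x p * J x p k) * u k by
          rw [Finset.sum_mul]; exact Finset.sum_congr rfl fun p _ => by ring]
        rw [hleft k]
      have h3 : ∑ i, v x i * (d * u i) = d * ∑ i, v x i * u i := by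
        rw [Finset.mul_sum]; exact Finset.sum_congr rfl fun i _ => by ring
      have h4 : (d - 1) * ∑ i, v x i * u i = 0 := by
        rw [sub_mul, one_mul, ← h3, ← h1, h2, sub_self]
      rcases mul_eq_zero.1 h4 with h | h
      · exact absurd (by linarith [sub_eq_zero.1 h]) hd
      · exact h
    funext p
    have hJup := congrFun hJu p
    simp only [Matrix.mulVec, dotProduct] at hJup ⊢
    rw [Finset.sum_congr rfl fun i _ => by rw [hGapp p i, sub_mul]]
    rw [Finset.sum_sub_distrib, hJup, hvu, sub_zero]
  · -- spectral bound
    intro lam ⟨z, hz, heigz⟩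
    have heigp : ∀ p, ∑ i, ((J x p i : ℂ) - (v x i : ℂ)) * z i = lam * z p := by
      intro p
      have := congrFun heigz p
      simp only [Matrix.mulVec, dotProduct, Matrix.map_apply, Pi.smul_apply,
        smul_eq_mul] at this
      rw [← this]
      exact Finset.sum_congr rfl fun i _ => by rw [hGapp p i]; push_cast; ring
    set s0 : ℂ := ∑ i, (v x i : ℂ) * z i with hs0_def
    have hvJc : ∀ i, ∑ p, (v x p : ℂ) * (J x p i : ℂ) = (v x i : ℂ) := by
      intro i
      exact_mod_cast congrArg Complex.ofReal (hleft i)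
    have hvc_sum : ∑ i, ((v x i : ℝ) : ℂ) = 1 := by
      exact_mod_cast congrArg Complex.ofReal hv_sum
    have hlam_s0 : lam * s0 = 0 := by
      have h1 : ∑ p, (v x p : ℂ) * (lam * z p) = lam * s0 := by
        rw [hs0_def, Finset.mul_sum]
        exact Finset.sum_congr rfl fun p _ => by ring
      rw [← h1]
      rw [Finset.sum_congr rfl fun p _ => by rw [← heigp p]]
      have h2 : ∑ p, (v x p : ℂ) * ∑ i, ((J x p i : ℂ) - (v x i : ℂ)) * z i
          = ∑ i, (∑ p, (v x p : ℂ) * (J x p i : ℂ)) * z i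
            - (∑ p, (v x p : ℂ)) * ∑ i, (v x i : ℂ) * z i := by
        simp only [Finset.mul_sum, Finset.sum_mul, sub_mul, mul_sub, Finset.sum_sub_distrib]
        rw [Finset.sum_comm]
        congr 1
        · exact Finset.sum_congr rfl fun i _ => Finset.sum_congr rfl fun p _ => by ring
        · rw [Finset.sum_comm]
      rw [h2, Finset.sum_congr rfl fun i _ => by rw [hvJc i], hvc_sum, one_mul, ← hs0_def,
        sub_self]
    by_cases hlam0 : lam = 0
    · rw [hlam0]; simp
    · have hs0z : s0 = 0 := by
        rcases mul_eq_zero.1 hlam_s0 with h | h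
        · exact absurd h hlam0
        · exact h
      have heigJ : ∀ p, ∑ i, (J x p i : ℂ) * z i = lam * z p := by
        intro p
        rw [← heigp p]
        rw [show ∑ i, ((J x p i : ℂ) - (v x i : ℂ)) * z i
            = ∑ i, (J x p i : ℂ) * z i - ∑ i, (v x i : ℂ) * z i by
          rw [← Finset.sum_sub_distrib]
          exact Finset.sum_congr rfl fun i _ => by ring]
        rw [← hs0_def, hs0z, sub_zero]
      have him : lam.im = 0 := eig_real_of_sym n (J x) (w x) hw_pos hwsym lam z hz heigJ
      have hlam : lam = ((lam.re : ℝ) : ℂ) := Complex.ext (by simp) (by simp [him])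
      set d : ℝ := lam.re with hd_def
      -- real and imaginary parts are real eigenvectors
      have hre : ∀ p, ∑ i, J x p i * (z i).re = d * (z p).re := by
        intro p
        have := congrArg Complex.re (heigJ p)
        rw [Complex.re_sum] at this
        simp only [Complex.mul_re, Complex.ofReal_re, Complex.ofReal_im, zero_mul,
          sub_zero] at this
        rw [this, him]
        ring
      have him_eig : ∀ p, ∑ i, J x p i * (z i).im = d * (z p).im := by
        intro p
        have := congrArg Complex.im (heigJ p)
        rw [Complex.im_sum] at this
        simp only [Complex.mul_im, Complex.ofReal_re, Complex.ofReal_im, zero_mul,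
          add_zero] at this
        rw [this, him]
        ring
      have hvre : ∑ i, v x i * (z i).re = 0 := by
        have := congrArg Complex.re hs0z
        rw [hs0_def, Complex.re_sum] at this
        simpa [Complex.mul_re] using this
      have hvim : ∑ i, v x i * (z i).im = 0 := by
        have := congrArg Complex.im hs0z
        rw [hs0_def, Complex.im_sum] at this
        simpa [Complex.mul_im] using this
      have habs : ‖lam‖ = |d| := by
        rw [hlam, Complex.norm_real, Real.norm_eq_abs]
      rw [habs]
      by_cases hzre : (fun i => (z i).re) = (0 : Fin n → ℝ)
      · have hzim : (fun i => (z i).im) ≠ (0 : Fin n → ℝ) := by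
          intro h
          apply hz
          funext i
          have h1 := congrFun hzre i
          have h2 := congrFun h i
          simp only [Pi.zero_apply] at h1 h2
          exact Complex.ext h1 h2
        exact perron_strict n hn (J x) (v x) hJpos hrow hv_pos d _ hzim him_eig hvim
      · exact perron_strict n hn (J x) (v x) hJpos hrow hv_pos d _ hzre hre hvre
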